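/- arXiv:1805.11811 — 2 statements merged into one kernel-verified Lean document; each statement's English description precedes it below -/
import Mathlib

section
/- Let $h : [n] \times \mathbb{R}^d \to \mathbb{R}^m$ (viewed as a function of an index $\xi_i$ and a random vector $u$), and suppose $\frac{1}{n}\sum_{i=1}^n \mathbb{E}_u[h(\xi_i, u)] = 0$. Let $\mathcal{B}$ be a uniformly random subset of $[n]$ of size $B$, and let $u_1, \dots, u_D$ be i.i.d. copies of $u$ independent of $\mathcal{B}$. Then $\mathbb{E} \left\| \frac{1}{BD} \sum_{b \in \mathcal{B}} \sum_{j=1}^D h(\xi_b, u_j) \right\|^2 \leq \left( \frac{1}{D} + \frac{\mathbb{1}[B<n]}{B} \right) \frac{1}{n} \sum_{i=1}^n \mathbb{E}_u \| h(\xi_i, u) \|^2$. -/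
open Finset MeasureTheory RealInnerProductSpace


theorem card_powersetCard_filter_subset {n : ℕ} (t : Finset (Fin n)) (B : ℕ) (htB : t.card ≤ B) :
    ((Finset.powersetCard B (univ : Finset (Fin n))).filter (fun S => t ⊆ S)).card
      = (n - t.card).choose (B - t.card) := by
  have : ((Finset.powersetCard B (univ : Finset (Fin n))).filter (fun S => t ⊆ S)).card
      = ((univ \ t).powersetCard (B - t.card)).card := by
    apply Finset.card_bij' (i := fun S _ => S \ t) (j := fun T _ => T ∪ t)
    · intro S hS
      simp only [Finset.mem_filter, Finset.mem_powersetCard_univ] at hS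
      rw [Finset.mem_powersetCard]
      exact ⟨Finset.sdiff_subset_sdiff (Finset.subset_univ S) le_rfl,
        by rw [Finset.card_sdiff_of_subset hS.2, hS.1]⟩
    · intro T hT
      rw [Finset.mem_powersetCard] at hT
      have hdisj : Disjoint T t := by
        rw [Finset.disjoint_left]
        intro x hx
        exact (Finset.mem_sdiff.mp (hT.1 hx)).2
      simp only [Finset.mem_filter, Finset.mem_powersetCard_univ]
      constructor
      · rw [Finset.card_union_of_disjoint hdisj, hT.2, Nat.sub_add_cancel htB]
      · exact Finset.subset_union_right
    · intro S hS
      simp only [Finset.mem_filter] at hS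
      exact Finset.sdiff_union_of_subset hS.2
    · intro T hT
      rw [Finset.mem_powersetCard] at hT
      have hdisj : Disjoint T t := by
        rw [Finset.disjoint_left]
        intro x hx
        exact (Finset.mem_sdiff.mp (hT.1 hx)).2
      exact Finset.union_sdiff_cancel_right hdisj
  rw [this, Finset.card_powersetCard, Finset.card_sdiff_of_subset (Finset.subset_univ t), Finset.card_univ,
    Fintype.card_fin]

theorem card_filter_mem {n B : ℕ} (hB : 1 ≤ B) (b : Fin n) :
    (((Finset.powersetCard B (univ : Finset (Fin n)))).filter (fun S => b ∈ S)).card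
      = (n - 1).choose (B - 1) := by
  have h := card_powersetCard_filter_subset ({b} : Finset (Fin n)) B (by simpa using hB)
  simp only [Finset.card_singleton, Finset.singleton_subset_iff] at h
  exact h

theorem card_filter_pair {n B : ℕ} (b b' : Fin n) (hbb : b ≠ b') :
    ((((Finset.powersetCard B (univ : Finset (Fin n)))).filter (fun S => b ∈ S ∧ b' ∈ S)).card : ℝ)
      = (if 2 ≤ B then (((n - 2).choose (B - 2) : ℕ) : ℝ) else 0) := by
  have hpred : ∀ S : Finset (Fin n), (b ∈ S ∧ b' ∈ S) ↔ ({b, b'} : Finset (Fin n)) ⊆ S := by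
    intro S; rw [Finset.insert_subset_iff, Finset.singleton_subset_iff]
  by_cases h2 : 2 ≤ B
  · have h := card_powersetCard_filter_subset ({b, b'} : Finset (Fin n)) B
      (by rwa [Finset.card_pair hbb])
    rw [Finset.card_pair hbb] at h
    rw [if_pos h2, Finset.filter_congr (fun S _ => by rw [hpred S]), h]
  · rw [if_neg h2]
    norm_cast
    rw [Finset.card_eq_zero, Finset.filter_eq_empty_iff]
    intro S hS hmem
    rw [Finset.mem_powersetCard_univ] at hS
    have := Finset.card_le_card ((hpred S).mp hmem)
    rw [Finset.card_pair hbb, hS] at this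
    omega

theorem sum_powersetCard_single {n B : ℕ} (hB : 1 ≤ B) (φ : Fin n → ℝ) :
    ∑ S ∈ Finset.powersetCard B (univ : Finset (Fin n)), ∑ b ∈ S, φ b
      = ((n - 1).choose (B - 1) : ℝ) * ∑ b, φ b := by
  have h1 : ∀ S ∈ Finset.powersetCard B (univ : Finset (Fin n)),
      ∑ b ∈ S, φ b = ∑ b : Fin n, if b ∈ S then φ b else 0 := by
    intro S _
    rw [Finset.sum_ite_mem, Finset.univ_inter]
  rw [Finset.sum_congr rfl h1, Finset.sum_comm]
  rw [Finset.mul_sum]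
  apply Finset.sum_congr rfl
  intro b _
  rw [← Finset.sum_filter, Finset.sum_const, card_filter_mem hB b, nsmul_eq_mul]

theorem sum_powersetCard_pair {n B : ℕ} (hB : 1 ≤ B) (ψ : Fin n → Fin n → ℝ) :
    ∑ S ∈ Finset.powersetCard B (univ : Finset (Fin n)), ∑ b ∈ S, ∑ b' ∈ S, ψ b b'
      = ((n - 1).choose (B - 1) : ℝ) * ∑ b, ψ b b
        + (if 2 ≤ B then (((n - 2).choose (B - 2) : ℕ) : ℝ) else 0) *
            ∑ p ∈ (univ : Finset (Fin n)).offDiag, ψ p.1 p.2 := by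
  have hsplit : ∀ S : Finset (Fin n), ∑ b ∈ S, ∑ b' ∈ S, ψ b b'
      = ∑ b ∈ S, ψ b b + ∑ p ∈ S.offDiag, ψ p.1 p.2 := by
    intro S
    rw [← Finset.sum_product', ← Finset.diag_union_offDiag,
      Finset.sum_union (Finset.disjoint_diag_offDiag S), Finset.sum_diag]
  simp_rw [hsplit]
  rw [Finset.sum_add_distrib, sum_powersetCard_single hB]
  congr 1
  have h1 : ∀ S ∈ Finset.powersetCard B (univ : Finset (Fin n)),
      ∑ p ∈ S.offDiag, ψ p.1 p.2
        = ∑ p ∈ (univ : Finset (Fin n)).offDiag, if p.1 ∈ S ∧ p.2 ∈ S then ψ p.1 p.2 else 0 := by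
    intro S _
    have hS : S.offDiag = univ.offDiag.filter (fun p => p.1 ∈ S ∧ p.2 ∈ S) := by
      ext p
      simp only [Finset.mem_offDiag, Finset.mem_filter, Finset.mem_univ, true_and]
      tauto
    rw [hS, Finset.sum_filter]
  rw [Finset.sum_congr rfl h1, Finset.sum_comm, Finset.mul_sum]
  apply Finset.sum_congr rfl
  intro p hp
  rw [← Finset.sum_filter, Finset.sum_const, nsmul_eq_mul,
    card_filter_pair p.1 p.2 (Finset.mem_offDiag.mp hp).2.2]

theorem integral_eval_pi {Ω : Type} [MeasurableSpace Ω] (ν : Measure Ω) [IsProbabilityMeasure ν] {D : ℕ}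
    (f : Ω → ℝ) (j : Fin D) :
    ∫ u : Fin D → Ω, f (u j) ∂(Measure.pi fun _ : Fin D => ν) = ∫ x, f x ∂ν := by
  letI : MeasureSpace Ω := ⟨ν⟩
  have hv : (Measure.pi fun _ : Fin D => ν) = (volume : Measure (Fin D → Ω)) := by
    rw [volume_pi]
    rfl
  rw [hv]
  have h1 : ∀ u : Fin D → Ω, f (u j) = ∏ i : Fin D, (if i = j then f else fun _ => 1) (u i) := by
    intro u
    rw [Finset.prod_eq_single j]
    · simp
    · intro b _ hb; simp [hb]
    · simp
  simp_rw [h1]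
  rw [show (volume : Measure (Fin D → Ω)) = Measure.pi (fun _ => volume) from rfl,
    MeasureTheory.integral_fintype_prod_eq_prod (𝕜 := ℝ)
    (f := fun i => (if i = j then f else fun _ => 1))]
  rw [Finset.prod_eq_single j]
  · simp; rfl
  · intro b _ hb
    simp only [hb, if_false]
    have : IsProbabilityMeasure (volume : Measure Ω) := ‹IsProbabilityMeasure ν›
    simp
  · simp

theorem integrable_eval_pi {Ω : Type} [MeasurableSpace Ω] (ν : Measure Ω) [IsProbabilityMeasure ν] {D : ℕ}
    (f : Ω → ℝ) (hf : Integrable f ν) (j : Fin D) :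
    Integrable (fun u : Fin D → Ω => f (u j)) (Measure.pi fun _ : Fin D => ν) := by
  letI : MeasureSpace Ω := ⟨ν⟩
  have hv : (Measure.pi fun _ : Fin D => ν) = (volume : Measure (Fin D → Ω)) := by
    rw [volume_pi]
    rfl
  rw [hv]
  have h1 : ∀ u : Fin D → Ω, f (u j) = ∏ i : Fin D, (if i = j then f else fun _ => 1) (u i) := by
    intro u
    rw [Finset.prod_eq_single j]
    · simp
    · intro b _ hb; simp [hb]
    · simp
  simp_rw [h1]
  apply Integrable.fintype_prod (𝕜 := ℝ)
  intro i
  have : IsProbabilityMeasure (volume : Measure Ω) := ‹IsProbabilityMeasure ν›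
  by_cases hi : i = j
  · simpa [hi] using (show Integrable f volume from hf)
  · simp only [hi, if_false]
    exact integrable_const 1
theorem integral_eval_mul_pi {Ω : Type} [MeasurableSpace Ω] (ν : Measure Ω) [IsProbabilityMeasure ν] {D : ℕ}
    (f g : Ω → ℝ) (j k : Fin D) (hjk : j ≠ k) :
    ∫ u : Fin D → Ω, f (u j) * g (u k) ∂(Measure.pi fun _ : Fin D => ν)
      = (∫ x, f x ∂ν) * ∫ x, g x ∂ν := by
  letI : MeasureSpace Ω := ⟨ν⟩
  have hv : (Measure.pi fun _ : Fin D => ν) = (volume : Measure (Fin D → Ω)) := by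
    rw [volume_pi]
    rfl
  rw [hv]
  set F : Fin D → Ω → ℝ := fun i => if i = j then f else if i = k then g else fun _ => 1 with hF
  have h1 : ∀ u : Fin D → Ω, f (u j) * g (u k) = ∏ i : Fin D, F i (u i) := by
    intro u
    rw [← Finset.prod_subset (Finset.subset_univ ({j, k} : Finset (Fin D)))
      (by intro x _ hx
          simp only [Finset.mem_insert, Finset.mem_singleton, not_or] at hx
          simp [F, hx.1, hx.2])]
    rw [Finset.prod_pair hjk]
    simp [F, hjk, Ne.symm hjk]
  simp_rw [h1]
  rw [show (volume : Measure (Fin D → Ω)) = Measure.pi (fun _ => volume) from rfl,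
    MeasureTheory.integral_fintype_prod_eq_prod (𝕜 := ℝ) (f := F)]
  have : IsProbabilityMeasure (volume : Measure Ω) := ‹IsProbabilityMeasure ν›
  rw [← Finset.prod_subset (Finset.subset_univ ({j, k} : Finset (Fin D)))
      (by intro x _ hx
          simp only [Finset.mem_insert, Finset.mem_singleton, not_or] at hx
          simp [F, hx.1, hx.2])]
  rw [Finset.prod_pair hjk]
  simp only [F, if_pos rfl, Ne.symm hjk, hjk, if_false, if_neg]
  rfl

theorem integrable_eval_mul_pi {Ω : Type} [MeasurableSpace Ω] (ν : Measure Ω) [IsProbabilityMeasure ν] {D : ℕ}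
    (f g : Ω → ℝ) (hf : Integrable f ν) (hg : Integrable g ν) (j k : Fin D) (hjk : j ≠ k) :
    Integrable (fun u : Fin D → Ω => f (u j) * g (u k)) (Measure.pi fun _ : Fin D => ν) := by
  letI : MeasureSpace Ω := ⟨ν⟩
  have hv : (Measure.pi fun _ : Fin D => ν) = (volume : Measure (Fin D → Ω)) := by
    rw [volume_pi]
    rfl
  rw [hv]
  set F : Fin D → Ω → ℝ := fun i => if i = j then f else if i = k then g else fun _ => 1 with hF
  have h1 : ∀ u : Fin D → Ω, f (u j) * g (u k) = ∏ i : Fin D, F i (u i) := by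
    intro u
    rw [← Finset.prod_subset (Finset.subset_univ ({j, k} : Finset (Fin D)))
      (by intro x _ hx
          simp only [Finset.mem_insert, Finset.mem_singleton, not_or] at hx
          simp [F, hx.1, hx.2])]
    rw [Finset.prod_pair hjk]
    simp [F, hjk, Ne.symm hjk]
  simp_rw [h1]
  apply Integrable.fintype_prod (𝕜 := ℝ)
  intro i
  have : IsProbabilityMeasure (volume : Measure Ω) := ‹IsProbabilityMeasure ν›
  by_cases hij : i = j
  · simpa [F, hij] using (show Integrable f volume from hf)
  · by_cases hik : i = k
    · subst hik
      simpa [F, hij, Ne.symm] using (show Integrable g volume from hg)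
    · simp only [F, hij, hik, if_false]
      exact integrable_const 1


theorem second_moment_sum_iid {Ω : Type} [MeasurableSpace Ω] (ν : Measure Ω)
    [IsProbabilityMeasure ν] {D m : ℕ} (Z : Ω → EuclideanSpace ℝ (Fin m))
    (hZ : MemLp Z 2 ν) :
    ∫ u : Fin D → Ω, ‖∑ j : Fin D, Z (u j)‖ ^ 2 ∂(Measure.pi fun _ : Fin D => ν)
      = D * (∫ ω, ‖Z ω‖ ^ 2 ∂ν) + ((D : ℝ) ^ 2 - D) * ‖∫ ω, Z ω ∂ν‖ ^ 2 := by
  set Zt : Fin m → Ω → ℝ := fun t ω => Z ω t with hZt_def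
  have hZt : ∀ t, MemLp (Zt t) 2 ν := fun t =>
    (EuclideanSpace.proj (𝕜 := ℝ) t).comp_memLp' hZ
  have hZtInt : ∀ t, Integrable (Zt t) ν := fun t => (hZt t).integrable one_le_two
  have hZint : Integrable Z ν := hZ.integrable one_le_two
  have hZtsq : ∀ t, Integrable (fun ω => Zt t ω * Zt t ω) ν := by
    intro t
    have := (hZt t).integrable_sq
    simpa [pow_two] using this
  -- pointwise expansion
  have hpt : ∀ u : Fin D → Ω, ‖∑ j : Fin D, Z (u j)‖ ^ 2
      = ∑ j : Fin D, ∑ k : Fin D, ∑ t : Fin m, Zt t (u j) * Zt t (u k) := by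
    intro u
    rw [← real_inner_self_eq_norm_sq, sum_inner]
    apply Finset.sum_congr rfl
    intro j _
    rw [inner_sum]
    apply Finset.sum_congr rfl
    intro k _
    simp [PiLp.inner_apply, RCLike.inner_apply, Zt, mul_comm]
  -- integrability of each (j,k) term
  have hint : ∀ j k : Fin D, Integrable
      (fun u : Fin D → Ω => ∑ t : Fin m, Zt t (u j) * Zt t (u k))
      (Measure.pi fun _ : Fin D => ν) := by
    intro j k
    apply integrable_finset_sum
    intro t _
    by_cases hjk : j = k
    · subst hjk
      exact integrable_eval_pi ν (fun ω => Zt t ω * Zt t ω) (hZtsq t) j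
    · exact integrable_eval_mul_pi ν (Zt t) (Zt t) (hZtInt t) (hZtInt t) j k hjk
  -- value of each (j,k) term
  have hval : ∀ j k : Fin D,
      ∫ u : Fin D → Ω, (∑ t : Fin m, Zt t (u j) * Zt t (u k)) ∂(Measure.pi fun _ : Fin D => ν)
        = if j = k then ∫ ω, ‖Z ω‖ ^ 2 ∂ν else ‖∫ ω, Z ω ∂ν‖ ^ 2 := by
    intro j k
    by_cases hjk : j = k
    · subst hjk
      rw [if_pos rfl]
      rw [integral_finset_sum _ (fun t _ =>
        integrable_eval_pi ν (fun ω => Zt t ω * Zt t ω) (hZtsq t) j)]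
      have : ∀ t : Fin m, ∫ u : Fin D → Ω, Zt t (u j) * Zt t (u j)
          ∂(Measure.pi fun _ : Fin D => ν) = ∫ ω, Zt t ω * Zt t ω ∂ν := fun t =>
        integral_eval_pi ν (fun ω => Zt t ω * Zt t ω) j
      rw [Finset.sum_congr rfl (fun t _ => this t), ← integral_finset_sum _ (fun t _ => hZtsq t)]
      apply integral_congr_ae
      filter_upwards with ω
      rw [← real_inner_self_eq_norm_sq]
      simp only [PiLp.inner_apply, RCLike.inner_apply, conj_trivial, Zt]
    · rw [if_neg hjk]
      rw [integral_finset_sum _ (fun t _ =>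
        integrable_eval_mul_pi ν (Zt t) (Zt t) (hZtInt t) (hZtInt t) j k hjk)]
      have : ∀ t : Fin m, ∫ u : Fin D → Ω, Zt t (u j) * Zt t (u k)
          ∂(Measure.pi fun _ : Fin D => ν) = (∫ ω, Zt t ω ∂ν) * ∫ ω, Zt t ω ∂ν := fun t =>
        integral_eval_mul_pi ν (Zt t) (Zt t) j k hjk
      rw [Finset.sum_congr rfl (fun t _ => this t)]
      have hproj : ∀ t : Fin m, ∫ ω, Zt t ω ∂ν = (∫ ω, Z ω ∂ν) t := by
        intro t
        exact (EuclideanSpace.proj (𝕜 := ℝ) t).integral_comp_comm hZint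
      rw [← real_inner_self_eq_norm_sq]
      simp only [PiLp.inner_apply, RCLike.inner_apply, conj_trivial]
      apply Finset.sum_congr rfl
      intro t _
      rw [hproj t]
  -- put together
  calc ∫ u : Fin D → Ω, ‖∑ j : Fin D, Z (u j)‖ ^ 2 ∂(Measure.pi fun _ : Fin D => ν)
      = ∫ u : Fin D → Ω, ∑ j : Fin D, ∑ k : Fin D, (∑ t : Fin m, Zt t (u j) * Zt t (u k))
          ∂(Measure.pi fun _ : Fin D => ν) := by
        apply integral_congr_ae
        filter_upwards with u
        exact hpt u
    _ = ∑ j : Fin D, ∑ k : Fin D, ∫ u : Fin D → Ω, (∑ t : Fin m, Zt t (u j) * Zt t (u k))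
          ∂(Measure.pi fun _ : Fin D => ν) := by
        rw [integral_finset_sum _ (fun j _ => integrable_finset_sum _ (fun k _ => hint j k))]
        exact Finset.sum_congr rfl fun j _ => integral_finset_sum _ (fun k _ => hint j k)
    _ = ∑ j : Fin D, ∑ k : Fin D,
          (if j = k then ∫ ω, ‖Z ω‖ ^ 2 ∂ν else ‖∫ ω, Z ω ∂ν‖ ^ 2) := by
        exact Finset.sum_congr rfl fun j _ => Finset.sum_congr rfl fun k _ => hval j k
    _ = D * (∫ ω, ‖Z ω‖ ^ 2 ∂ν) + ((D : ℝ) ^ 2 - D) * ‖∫ ω, Z ω ∂ν‖ ^ 2 := by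
        set A := ∫ ω, ‖Z ω‖ ^ 2 ∂ν
        set P := ‖∫ ω, Z ω ∂ν‖ ^ 2
        have : ∀ j : Fin D, ∑ k : Fin D, (if j = k then A else P)
            = P * D + (A - P) := by
          intro j
          have : ∀ k : Fin D, (if j = k then A else P) = P + (if j = k then A - P else 0) := by
            intro k
            by_cases hjk : j = k <;> simp [hjk]
          rw [Finset.sum_congr rfl (fun k _ => this k), Finset.sum_add_distrib,
            Finset.sum_const, Finset.sum_ite_eq, if_pos (Finset.mem_univ j)]
          simp [mul_comm]
        rw [Finset.sum_congr rfl (fun j _ => this j), Finset.sum_const]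
        simp only [Finset.card_univ, Fintype.card_fin, nsmul_eq_mul]
        ring


theorem sq_norm_integral_le_pf {Ω : Type} [MeasurableSpace Ω] (ν : Measure Ω)
    [IsProbabilityMeasure ν] {m : ℕ} (f : Ω → EuclideanSpace ℝ (Fin m)) (hf : MemLp f 2 ν) :
    ‖∫ ω, f ω ∂ν‖ ^ 2 ≤ ∫ ω, ‖f ω‖ ^ 2 ∂ν := by
  set c := ∫ ω, ‖f ω‖ ∂ν with hc_def
  have hnorm : Integrable (fun ω => ‖f ω‖) ν := (hf.integrable one_le_two).norm
  have hnorm2 : Integrable (fun ω => ‖f ω‖ ^ 2) ν :=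
    (memLp_two_iff_integrable_sq_norm hf.1).mp hf
  have h1 : ‖∫ ω, f ω ∂ν‖ ≤ c := norm_integral_le_integral_norm _
  have hc : 0 ≤ c := integral_nonneg fun ω => norm_nonneg _
  have h2 : c ^ 2 ≤ ∫ ω, ‖f ω‖ ^ 2 ∂ν := by
    have h0 : 0 ≤ ∫ ω, (‖f ω‖ - c) ^ 2 ∂ν := integral_nonneg fun ω => sq_nonneg _
    have hexp : (fun ω => (‖f ω‖ - c) ^ 2)
        = fun ω => (‖f ω‖ ^ 2 - (2 * c) * ‖f ω‖) + c ^ 2 := by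
      funext ω; ring
    have hsub : Integrable (fun ω => ‖f ω‖ ^ 2 - 2 * c * ‖f ω‖) ν :=
      hnorm2.sub (hnorm.const_mul (2 * c))
    have hmul : Integrable (fun ω => 2 * c * ‖f ω‖) ν := hnorm.const_mul (2 * c)
    rw [hexp, integral_add hsub (integrable_const _),
      integral_sub hnorm2 hmul, MeasureTheory.integral_const_mul, integral_const] at h0
    simp only [measure_univ, probReal_univ, ENNReal.toReal_one, smul_eq_mul, one_mul, ← hc_def] at h0
    nlinarith
  calc ‖∫ ω, f ω ∂ν‖ ^ 2 ≤ c ^ 2 := by nlinarith [norm_nonneg (∫ ω, f ω ∂ν)]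
    _ ≤ _ := h2

theorem norm_sq_sum_le_pf {m : ℕ} {ι : Type*} (S : Finset ι) (v : ι → EuclideanSpace ℝ (Fin m)) :
    ‖∑ b ∈ S, v b‖ ^ 2 ≤ (S.card : ℝ) * ∑ b ∈ S, ‖v b‖ ^ 2 := by
  calc ‖∑ b ∈ S, v b‖ ^ 2 ≤ (∑ b ∈ S, ‖v b‖) ^ 2 := by
        have := norm_sum_le S v
        nlinarith [norm_nonneg (∑ b ∈ S, v b), Finset.sum_nonneg (fun b (_ : b ∈ S) => norm_nonneg (v b))]
    _ ≤ (S.card : ℝ) * ∑ b ∈ S, ‖v b‖ ^ 2 := by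
        exact_mod_cast sq_sum_le_card_mul_sum_sq (s := S) (f := fun b => ‖v b‖)


/-- Variance bound for the double average over a uniform random `B`-subset `𝒮` of `[n]`
and `D` i.i.d. samples `u 1, …, u D ∼ ν`, under the centering condition
`(1/n) ∑ᵢ 𝔼ᵤ[h ξᵢ u] = 0`. -/
theorem stmt_5 (n m B D : ℕ) (hB1 : 1 ≤ B) (hBn : B ≤ n) (hD : 1 ≤ D)
    {Ω : Type} [MeasurableSpace Ω] (ν : Measure Ω) [IsProbabilityMeasure ν]
    (h : Fin n → Ω → EuclideanSpace ℝ (Fin m))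
    (hL2 : ∀ i, MemLp (h i) 2 ν)
    (hcenter : (1 / (n : ℝ)) • ∑ i, ∫ ω, h i ω ∂ν = 0) :
    (1 / (n.choose B : ℝ)) *
        ∑ S ∈ Finset.powersetCard B (Finset.univ : Finset (Fin n)),
          ∫ u : Fin D → Ω,
            ‖(1 / ((B : ℝ) * (D : ℝ))) • ∑ b ∈ S, ∑ j : Fin D, h b (u j)‖ ^ 2
            ∂(Measure.pi fun _ : Fin D => ν)
      ≤ (1 / (D : ℝ) + (if B < n then (1 : ℝ) else 0) / (B : ℝ)) *
          ((1 / (n : ℝ)) * ∑ i, ∫ ω, ‖h i ω‖ ^ 2 ∂ν) := by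
  classical
  have hn1 : 1 ≤ n := le_trans hB1 hBn
  have hnR : (0 : ℝ) < n := by exact_mod_cast hn1
  have hBR : (0 : ℝ) < B := by exact_mod_cast hB1
  have hDR : (1 : ℝ) ≤ D := by exact_mod_cast hD
  have hDR0 : (0 : ℝ) < D := lt_of_lt_of_le one_pos hDR
  set π := (Measure.pi fun _ : Fin D => ν) with hπ_def
  set g : Fin n → EuclideanSpace ℝ (Fin m) := fun i => ∫ ω, h i ω ∂ν with hg_def
  set σ2 : Fin n → ℝ := fun i => ∫ ω, ‖h i ω‖ ^ 2 ∂ν with hσ2_def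
  set S2 := ∑ i, σ2 i with hS2_def
  have hσ2nn : ∀ i, 0 ≤ σ2 i := fun i => integral_nonneg fun ω => sq_nonneg _
  have hS2nn : 0 ≤ S2 := Finset.sum_nonneg fun i _ => hσ2nn i
  have hIntSq : ∀ i : Fin n, Integrable (fun ω => ‖h i ω‖ ^ 2) ν := fun i =>
    (memLp_two_iff_integrable_sq_norm (hL2 i).1).mp (hL2 i)
  have hInth : ∀ i : Fin n, Integrable (h i) ν := fun i => (hL2 i).integrable one_le_two
  have hsum0 : ∑ i, g i = 0 := by
    rcases smul_eq_zero.mp hcenter with hc | hc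
    · exact absurd hc (by positivity)
    · exact hc
  set G := ∑ i, ‖g i‖ ^ 2 with hG_def
  have hGnn : 0 ≤ G := Finset.sum_nonneg fun i _ => sq_nonneg _
  have hGS2 : G ≤ S2 := Finset.sum_le_sum fun i _ => sq_norm_integral_le_pf ν (h i) (hL2 i)
  set N : ℝ := (n.choose B : ℝ) with hN_def
  set N1 : ℝ := ((n - 1).choose (B - 1) : ℝ) with hN1_def
  set N2 : ℝ := (if 2 ≤ B then (((n - 2).choose (B - 2) : ℕ) : ℝ) else 0) with hN2_def
  have hNpos : 0 < N := by
    rw [hN_def]; exact_mod_cast Nat.choose_pos hBn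
  have hN1nn : 0 ≤ N1 := by rw [hN1_def]; positivity
  have hN2nn : 0 ≤ N2 := by rw [hN2_def]; split <;> positivity
  have hNN1 : (n : ℝ) * N1 = (B : ℝ) * N := by
    have hx := Nat.add_one_mul_choose_eq (n - 1) (B - 1)
    have h1 : n - 1 + 1 = n := Nat.succ_pred_eq_of_pos hn1
    have h2 : B - 1 + 1 = B := Nat.succ_pred_eq_of_pos hB1
    rw [h1, h2] at hx
    rw [hN_def, hN1_def]
    exact_mod_cast hx.trans (mul_comm _ _)
  have hN1eq : N1 = (B : ℝ) * N / (n : ℝ) := by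
    field_simp
    linarith [hNN1]
  set c : ℝ := 1 / ((B : ℝ) * (D : ℝ)) with hc_def
  have hcnn : 0 ≤ c := by positivity
  set A : Finset (Fin n) → ℝ := fun S => ∫ ω, ‖∑ b ∈ S, h b ω‖ ^ 2 ∂ν with hA_def
  have hZS : ∀ S : Finset (Fin n), MemLp (fun ω => ∑ b ∈ S, h b ω) 2 ν := fun S =>
    memLp_finset_sum S fun i _ => hL2 i
  have hZSsq : ∀ S : Finset (Fin n), Integrable (fun ω => ‖∑ b ∈ S, h b ω‖ ^ 2) ν := fun S =>
    (memLp_two_iff_integrable_sq_norm (hZS S).1).mp (hZS S)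
  -- per-S value
  have hI : ∀ S ∈ Finset.powersetCard B (Finset.univ : Finset (Fin n)),
      (∫ u : Fin D → Ω, ‖c • ∑ b ∈ S, ∑ j : Fin D, h b (u j)‖ ^ 2 ∂π)
        = c ^ 2 * ((D : ℝ) * A S + ((D : ℝ) ^ 2 - D) * ‖∑ b ∈ S, g b‖ ^ 2) := by
    intro S _
    have hptw : ∀ u : Fin D → Ω, ‖c • ∑ b ∈ S, ∑ j : Fin D, h b (u j)‖ ^ 2
        = c ^ 2 * ‖∑ j : Fin D, (fun ω => ∑ b ∈ S, h b ω) (u j)‖ ^ 2 := by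
      intro u
      rw [show (∑ b ∈ S, ∑ j : Fin D, h b (u j)) = ∑ j : Fin D, ∑ b ∈ S, h b (u j) from
        Finset.sum_comm]
      rw [norm_smul, mul_pow, Real.norm_eq_abs, sq_abs]
    rw [integral_congr_ae (Filter.Eventually.of_forall hptw), integral_const_mul,
      second_moment_sum_iid ν _ (hZS S)]
    congr 2
    rw [integral_finset_sum S fun b _ => hInth b]
  -- rewrite the LHS sum
  rw [Finset.sum_congr rfl hI]
  have hsum_eq : ∑ S ∈ Finset.powersetCard B (Finset.univ : Finset (Fin n)),
        (c ^ 2 * ((D : ℝ) * A S + ((D : ℝ) ^ 2 - D) * ‖∑ b ∈ S, g b‖ ^ 2))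
      = c ^ 2 * (D : ℝ) * (∑ S ∈ Finset.powersetCard B (Finset.univ : Finset (Fin n)), A S)
        + c ^ 2 * ((D : ℝ) ^ 2 - D) *
            (∑ S ∈ Finset.powersetCard B (Finset.univ : Finset (Fin n)),
              ‖∑ b ∈ S, g b‖ ^ 2) := by
    rw [Finset.mul_sum, Finset.mul_sum, ← Finset.sum_add_distrib]
    exact Finset.sum_congr rfl fun S _ => by ring
  rw [hsum_eq]
  set a := ∑ S ∈ Finset.powersetCard B (Finset.univ : Finset (Fin n)), A S with ha_def
  set Q := ∑ S ∈ Finset.powersetCard B (Finset.univ : Finset (Fin n)),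
    ‖∑ b ∈ S, g b‖ ^ 2 with hQ_def
  -- bound on a
  have hAbound : a ≤ (B : ℝ) * (N1 * S2) := by
    have h1 : ∀ S ∈ Finset.powersetCard B (Finset.univ : Finset (Fin n)),
        A S ≤ (B : ℝ) * ∑ b ∈ S, σ2 b := by
      intro S hS
      have hcard : S.card = B := Finset.mem_powersetCard_univ.mp hS
      have hpt : ∀ ω, ‖∑ b ∈ S, h b ω‖ ^ 2 ≤ (B : ℝ) * ∑ b ∈ S, ‖h b ω‖ ^ 2 := by
        intro ω
        have := norm_sq_sum_le_pf S (fun b => h b ω)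
        rwa [hcard] at this
      calc A S ≤ ∫ ω, (B : ℝ) * ∑ b ∈ S, ‖h b ω‖ ^ 2 ∂ν := by
            exact integral_mono (hZSsq S)
              ((integrable_finset_sum S fun b _ => hIntSq b).const_mul _) hpt
        _ = (B : ℝ) * ∑ b ∈ S, σ2 b := by
            rw [integral_const_mul, integral_finset_sum S fun b _ => hIntSq b]
    calc a ≤ ∑ S ∈ Finset.powersetCard B (Finset.univ : Finset (Fin n)),
          (B : ℝ) * ∑ b ∈ S, σ2 b := Finset.sum_le_sum h1
      _ = (B : ℝ) * ∑ S ∈ Finset.powersetCard B (Finset.univ : Finset (Fin n)),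
          ∑ b ∈ S, σ2 b := by rw [Finset.mul_sum]
      _ = (B : ℝ) * (N1 * S2) := by rw [sum_powersetCard_single hB1 σ2]
  have h_anonneg : 0 ≤ a := Finset.sum_nonneg fun S _ =>
    integral_nonneg fun ω => sq_nonneg _
  -- key term 1
  have key1 : (1 / N) * (c ^ 2 * (D : ℝ) * a) ≤ (1 / (D : ℝ)) * ((1 / (n : ℝ)) * S2) := by
    have hid : (1 / N) * (c ^ 2 * (D : ℝ) * ((B : ℝ) * (N1 * S2)))
        = (1 / (D : ℝ)) * ((1 / (n : ℝ)) * S2) := by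
      rw [hN1eq, hc_def]
      field_simp
    calc (1 / N) * (c ^ 2 * (D : ℝ) * a)
        ≤ (1 / N) * (c ^ 2 * (D : ℝ) * ((B : ℝ) * (N1 * S2))) := by
          apply mul_le_mul_of_nonneg_left _ (by positivity)
          exact mul_le_mul_of_nonneg_left hAbound (by positivity)
      _ = (1 / (D : ℝ)) * ((1 / (n : ℝ)) * S2) := hid
  -- identity for Q
  have hQval : Q = N1 * G + N2 * (-G) := by
    have hQ1 : ∀ S : Finset (Fin n), ‖∑ b ∈ S, g b‖ ^ 2
        = ∑ b ∈ S, ∑ b' ∈ S, ⟪g b, g b'⟫ := by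
      intro S
      rw [← real_inner_self_eq_norm_sq, sum_inner]
      exact Finset.sum_congr rfl fun b _ => inner_sum _ _ _
    rw [hQ_def, Finset.sum_congr rfl (fun S _ => hQ1 S),
      sum_powersetCard_pair hB1 (fun b b' => ⟪g b, g b'⟫)]
    have hdiag : ∑ b : Fin n, ⟪g b, g b⟫ = G :=
      Finset.sum_congr rfl fun b _ => real_inner_self_eq_norm_sq _
    have hoff : ∑ p ∈ (Finset.univ : Finset (Fin n)).offDiag, ⟪g p.1, g p.2⟫ = -G := by
      have htot : ∑ p ∈ (Finset.univ : Finset (Fin n)) ×ˢ (Finset.univ : Finset (Fin n)),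
          ⟪g p.1, g p.2⟫ = 0 := by
        rw [Finset.sum_product]
        have : ∀ b : Fin n, ∑ b' : Fin n, ⟪g b, g b'⟫ = 0 := by
          intro b
          rw [← inner_sum, hsum0, inner_zero_right]
        rw [Finset.sum_congr rfl fun b _ => this b, Finset.sum_const, smul_zero]
      rw [← Finset.diag_union_offDiag,
        Finset.sum_union (Finset.disjoint_diag_offDiag _), Finset.sum_diag] at htot
      have hd2 : ∑ b : Fin n, ⟪g b, g b⟫ = G := hdiag
      linarith [htot]
    rw [hdiag, hoff]
  -- final case analysis
  rcases lt_or_eq_of_le hBn with hcase | hcase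
  · -- B < n
    rw [if_pos hcase]
    have hD2 : (0 : ℝ) ≤ (D : ℝ) ^ 2 - D := by
      have hDD : (0 : ℝ) ≤ (D : ℝ) * ((D : ℝ) - 1) :=
        mul_nonneg (le_of_lt hDR0) (by linarith)
      have hre : (D : ℝ) * ((D : ℝ) - 1) = (D : ℝ) ^ 2 - (D : ℝ) := by ring
      linarith
    have hQle : Q ≤ N1 * G := by
      rw [hQval]
      have hng := mul_nonneg hN2nn hGnn
      linarith
    have key2 : (1 / N) * (c ^ 2 * ((D : ℝ) ^ 2 - D) * Q)
        ≤ (1 / (B : ℝ)) * ((1 / (n : ℝ)) * S2) := by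
      have hid : (1 / N) * (c ^ 2 * (D : ℝ) ^ 2 * (N1 * S2))
          = (1 / (B : ℝ)) * ((1 / (n : ℝ)) * S2) := by
        rw [hN1eq, hc_def]
        field_simp
      calc (1 / N) * (c ^ 2 * ((D : ℝ) ^ 2 - D) * Q)
          ≤ (1 / N) * (c ^ 2 * ((D : ℝ) ^ 2 - D) * (N1 * G)) := by
            apply mul_le_mul_of_nonneg_left _ (by positivity)
            exact mul_le_mul_of_nonneg_left hQle (by positivity)
        _ ≤ (1 / N) * (c ^ 2 * (D : ℝ) ^ 2 * (N1 * G)) := by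
            apply mul_le_mul_of_nonneg_left _ (by positivity)
            exact mul_le_mul_of_nonneg_right
              (mul_le_mul_of_nonneg_left (by linarith [hDR0.le]) (sq_nonneg c))
              (mul_nonneg hN1nn hGnn)
        _ ≤ (1 / N) * (c ^ 2 * (D : ℝ) ^ 2 * (N1 * S2)) := by
            apply mul_le_mul_of_nonneg_left _ (by positivity)
            exact mul_le_mul_of_nonneg_left (mul_le_mul_of_nonneg_left hGS2 hN1nn)
              (by positivity)
        _ = (1 / (B : ℝ)) * ((1 / (n : ℝ)) * S2) := hid
    calc (1 / N) * (c ^ 2 * (D : ℝ) * a + c ^ 2 * ((D : ℝ) ^ 2 - D) * Q)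
        = (1 / N) * (c ^ 2 * (D : ℝ) * a) + (1 / N) * (c ^ 2 * ((D : ℝ) ^ 2 - D) * Q) := by
          ring
      _ ≤ (1 / (D : ℝ)) * ((1 / (n : ℝ)) * S2) + (1 / (B : ℝ)) * ((1 / (n : ℝ)) * S2) :=
          add_le_add key1 key2
      _ = (1 / (D : ℝ) + 1 / (B : ℝ)) * ((1 / (n : ℝ)) * S2) := by ring
  · -- B = n
    rw [if_neg (by omega : ¬ B < n)]
    have hQ0 : Q = 0 := by
      have hPeq : Finset.powersetCard B (Finset.univ : Finset (Fin n))
          = {(Finset.univ : Finset (Fin n))} := by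
        have : B = (Finset.univ : Finset (Fin n)).card := by
          rw [Finset.card_univ, Fintype.card_fin]; exact hcase
        rw [this, Finset.powersetCard_self]
      rw [hQ_def, hPeq, Finset.sum_singleton, hsum0, norm_zero]
      norm_num
    rw [hQ0, mul_zero, add_zero]
    calc (1 / N) * (c ^ 2 * (D : ℝ) * a) ≤ (1 / (D : ℝ)) * ((1 / (n : ℝ)) * S2) := key1
      _ = (1 / (D : ℝ) + 0 / (B : ℝ)) * ((1 / (n : ℝ)) * S2) := by ring
end

section
/- Let $F : \mathbb{R}^d \to \mathbb{R}$ be differentiable with $L_1$-Lipschitz gradient, let $\mu > 0$, and define $G_\mu(x, u) = \frac{F(x + \mu u) - F(x)}{\mu} u$. Then for any two points $x, y \in \mathbb{R}^d$ and any $u \in \mathbb{R}^d$, $\|G_\mu(x, u) - G_\mu(y, u)\|^2 \leq \frac{3}{2} L_1^2 \mu^2 \|u\|^6 + 3 \langle \nabla F(x) - \nabla F(y), u \rangle^2 \|u\|^2$. -/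
open RealInnerProductSpace

lemma taylor_aux (d : ℕ) (L1 : ℝ)
    (F : EuclideanSpace ℝ (Fin d) → ℝ)
    (g : EuclideanSpace ℝ (Fin d) → EuclideanSpace ℝ (Fin d))
    (hgrad : ∀ x, HasGradientAt F (g x) x)
    (hlip : ∀ a b, ‖g a - g b‖ ≤ L1 * ‖a - b‖)
    (a h : EuclideanSpace ℝ (Fin d)) :
    |F (a + h) - F a - ⟪g a, h⟫| ≤ L1 / 2 * ‖h‖ ^ 2 := by
  rcases eq_or_ne h 0 with rfl | hh
  · simp
  have hL1 : 0 ≤ L1 := by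
    have h1 := (norm_nonneg (g a - g (a + h))).trans (hlip a (a + h))
    have h2 : ‖a - (a + h)‖ = ‖h‖ := by simp
    rw [h2] at h1
    exact nonneg_of_mul_nonneg_right (by linarith [h1] : (0:ℝ) ≤ ‖h‖ * L1) (norm_pos_iff.mpr hh)
  have hg_cont : Continuous g := by
    have : LipschitzWith ‖L1‖₊ g := by
      apply LipschitzWith.of_dist_le_mul
      intro p q
      simp only [dist_eq_norm]
      calc ‖g p - g q‖ ≤ L1 * ‖p - q‖ := hlip p q
        _ ≤ ‖L1‖ * ‖p - q‖ := by
            apply mul_le_mul_of_nonneg_right (le_abs_self L1) (norm_nonneg _)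
    exact this.continuous
  have hline : ∀ t : ℝ, HasDerivAt (fun t : ℝ => a + t • h) h t := fun t => by
    simpa using ((hasDerivAt_id t).smul_const h).const_add a
  have hderiv : ∀ t ∈ Set.uIcc (0:ℝ) 1,
      HasDerivAt (fun t : ℝ => F (a + t • h)) ⟪g (a + t • h), h⟫ t := by
    intro t _
    have hF := (hgrad (a + t • h)).hasFDerivAt
    have := hF.comp_hasDerivAt t (hline t)
    simp [InnerProductSpace.toDual_apply_apply] at this; exact this
  have hcont : Continuous fun t : ℝ => (⟪g (a + t • h), h⟫ : ℝ) := by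
    apply Continuous.inner
    · exact hg_cont.comp (continuous_const.add (continuous_id.smul continuous_const))
    · exact continuous_const
  have hint : IntervalIntegrable (fun t : ℝ => (⟪g (a + t • h), h⟫ : ℝ))
      MeasureTheory.volume 0 1 := hcont.intervalIntegrable 0 1
  have hFTC : F (a + h) - F a = ∫ t in (0:ℝ)..1, (⟪g (a + t • h), h⟫ : ℝ) := by
    have := intervalIntegral.integral_eq_sub_of_hasDerivAt hderiv hint
    simpa using this.symm
  have hconst : (⟪g a, h⟫ : ℝ) = ∫ t in (0:ℝ)..1, (⟪g a, h⟫ : ℝ) := by simp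
  have hdiff : F (a + h) - F a - ⟪g a, h⟫
      = ∫ t in (0:ℝ)..1, ((⟪g (a + t • h), h⟫ : ℝ) - ⟪g a, h⟫) := by
    rw [hFTC, hconst, ← intervalIntegral.integral_sub hint]
    · simp
    · exact intervalIntegrable_const
  rw [hdiff]
  have hbound : ∀ t ∈ Set.uIoc (0:ℝ) 1,
      ‖(⟪g (a + t • h), h⟫ : ℝ) - ⟪g a, h⟫‖ ≤ L1 * ‖h‖ ^ 2 * t := by
    intro t ht
    rw [Set.uIoc_of_le zero_le_one] at ht
    have ht0 : 0 < t := ht.1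
    have : (⟪g (a + t • h), h⟫ : ℝ) - ⟪g a, h⟫ = ⟪g (a + t • h) - g a, h⟫ := by
      rw [inner_sub_left]
    rw [this]
    calc ‖(⟪g (a + t • h) - g a, h⟫ : ℝ)‖ ≤ ‖g (a + t • h) - g a‖ * ‖h‖ :=
          norm_inner_le_norm _ _
      _ ≤ (L1 * ‖(a + t • h) - a‖) * ‖h‖ :=
          mul_le_mul_of_nonneg_right (hlip _ _) (norm_nonneg _)
      _ = L1 * ‖h‖ ^ 2 * t := by
          rw [add_sub_cancel_left, norm_smul, Real.norm_eq_abs, abs_of_pos ht0]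
          ring
  have := intervalIntegral.norm_integral_le_abs_of_norm_le
    (μ := MeasureTheory.volume) (g := fun t => L1 * ‖h‖ ^ 2 * t)
    (MeasureTheory.ae_restrict_of_forall_mem measurableSet_uIoc hbound)
    (by apply Continuous.intervalIntegrable; continuity)
  rw [← Real.norm_eq_abs]
  refine this.trans_eq ?_
  rw [intervalIntegral.integral_const_mul]
  simp only [intervalIntegral.integral_const_mul, integral_id]
  rw [abs_of_nonneg (by positivity)]
  ring

/-- Pointwise bound for the difference of finite-difference gradient estimators
`G_μ(x, u) = μ⁻¹ (F(x + μu) - F(x)) u` for an `L₁`-smooth `F`. -/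
theorem stmt_10 (d : ℕ) (L1 μ : ℝ) (hμ : 0 < μ)
    (F : EuclideanSpace ℝ (Fin d) → ℝ)
    (g : EuclideanSpace ℝ (Fin d) → EuclideanSpace ℝ (Fin d))
    (hgrad : ∀ x, HasGradientAt F (g x) x)
    (hlip : ∀ a b, ‖g a - g b‖ ≤ L1 * ‖a - b‖)
    (x y u : EuclideanSpace ℝ (Fin d)) :
    ‖((F (x + μ • u) - F x) / μ) • u - ((F (y + μ • u) - F y) / μ) • u‖ ^ 2
      ≤ 3 / 2 * L1 ^ 2 * μ ^ 2 * ‖u‖ ^ 6 + 3 * (⟪g x - g y, u⟫ : ℝ) ^ 2 * ‖u‖ ^ 2 := by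
  have hx := taylor_aux d L1 F g hgrad hlip x (μ • u)
  have hy := taylor_aux d L1 F g hgrad hlip y (μ • u)
  set A := F (x + μ • u) - F x with hA
  set B := F (y + μ • u) - F y with hB
  have hnorm : ‖(A / μ) • u - (B / μ) • u‖ ^ 2 = ((A - B) / μ) ^ 2 * ‖u‖ ^ 2 := by
    rw [← sub_smul, ← sub_div, norm_smul, Real.norm_eq_abs, mul_pow, sq_abs]
  rw [hnorm]
  set e1 : ℝ := A - ⟪g x, μ • u⟫ with he1
  set e2 : ℝ := B - ⟪g y, μ • u⟫ with he2
  have hmu2 : ‖μ • u‖ ^ 2 = μ ^ 2 * ‖u‖ ^ 2 := by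
    rw [norm_smul, Real.norm_eq_abs, mul_pow, sq_abs]
  rw [hmu2] at hx hy
  have hsplit : (A - B) / μ = (e1 - e2) / μ + ⟪g x - g y, u⟫ := by
    rw [inner_sub_left]
    have h1 : (⟪g x, μ • u⟫ : ℝ) = μ * ⟪g x, u⟫ := real_inner_smul_right _ _ _
    have h2 : (⟪g y, μ • u⟫ : ℝ) = μ * ⟪g y, u⟫ := real_inner_smul_right _ _ _
    field_simp [he1, he2, h1, h2]
    rw [he1, he2, h1, h2]; ring
  rw [hsplit]
  set c : ℝ := ⟪g x - g y, u⟫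
  have he1sq : e1 ^ 2 ≤ (L1 / 2 * (μ ^ 2 * ‖u‖ ^ 2)) ^ 2 := by
    rw [← sq_abs e1]; exact pow_le_pow_left₀ (abs_nonneg _) hx 2
  have he2sq : e2 ^ 2 ≤ (L1 / 2 * (μ ^ 2 * ‖u‖ ^ 2)) ^ 2 := by
    rw [← sq_abs e2]; exact pow_le_pow_left₀ (abs_nonneg _) hy 2
  have hkey : ((e1 - e2) / μ + c) ^ 2 ≤ 3 / 2 * L1 ^ 2 * μ ^ 2 * ‖u‖ ^ 4 + 3 * c ^ 2 := by
    have h3 : ((e1 - e2) / μ + c) ^ 2 ≤ 3 * (e1 / μ) ^ 2 + 3 * (e2 / μ) ^ 2 + 3 * c ^ 2 := by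
      have : ((e1 - e2) / μ + c) = e1 / μ + (-(e2 / μ)) + c := by ring
      rw [this]
      nlinarith [sq_nonneg (e1 / μ - (-(e2 / μ))), sq_nonneg (e1 / μ - c),
        sq_nonneg (-(e2 / μ) - c)]
    have hμ2 : (0:ℝ) < μ ^ 2 := by positivity
    have hd1 : (e1 / μ) ^ 2 ≤ L1 ^ 2 / 4 * μ ^ 2 * ‖u‖ ^ 4 := by
      rw [div_pow]
      rw [div_le_iff₀ hμ2]
      exact he1sq.trans (le_of_eq (by ring))
    have hd2 : (e2 / μ) ^ 2 ≤ L1 ^ 2 / 4 * μ ^ 2 * ‖u‖ ^ 4 := by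
      rw [div_pow]
      rw [div_le_iff₀ hμ2]
      exact he2sq.trans (le_of_eq (by ring))
    linarith
  calc ((e1 - e2) / μ + c) ^ 2 * ‖u‖ ^ 2
      ≤ (3 / 2 * L1 ^ 2 * μ ^ 2 * ‖u‖ ^ 4 + 3 * c ^ 2) * ‖u‖ ^ 2 :=
        mul_le_mul_of_nonneg_right hkey (by positivity)
    _ = 3 / 2 * L1 ^ 2 * μ ^ 2 * ‖u‖ ^ 6 + 3 * c ^ 2 * ‖u‖ ^ 2 := by ring
end
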